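/- Let (X,d) be a finite ultrametric space with n points and let x_1, ..., x_n be an enumeration of X produced greedily: x_1 arbitrary, and each x_{i+1} minimizes d(x, x_i) over all x not in {x_1,...,x_i}. Then the path x_1 — x_2 — ... — x_n is a minimum weight spanning tree of the complete weighted graph on X with weights given by d. -/

import Mathlib

/-- The weight of an edge of the complete graph on a metric space. -/
noncomputable def edgeWeight (X : Type*) [MetricSpace X] : Sym2 X → ℝ :=
  Sym2.lift ⟨fun x y => dist x y, fun x y => dist_comm x y⟩

/-- The total weight of (the edges of) a graph on a finite metric space. -/
noncomputable def graphWeight {X : Type*} [MetricSpace X] [Fintype X]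
    (G : SimpleGraph X) : ℝ :=
  ∑ e ∈ G.edgeSet.toFinite.toFinset, edgeWeight X e

/-- A minimum weight spanning tree of the complete weighted graph on a finite
metric space `X` with weights given by the metric: a tree on the vertex set `X`
whose total weight is minimal among all such trees. -/
def IsMST {X : Type*} [MetricSpace X] [Fintype X] (T : SimpleGraph X) : Prop :=
  T.IsTree ∧ ∀ G : SimpleGraph X, G.IsTree → graphWeight T ≤ graphWeight G

/-- The path graph `x 0 — x 1 — ⋯ — x (n-1)` on `X`. -/
def pathGraphOn {X : Type*} (n : ℕ) (x : ℕ → X) : SimpleGraph X :=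
  SimpleGraph.fromRel (fun u v => ∃ i : ℕ, i + 1 < n ∧ u = x i ∧ v = x (i + 1))

open SimpleGraph

private lemma reachable_trans_of_adj {V : Type*} {G H : SimpleGraph V}
    (h : ∀ a b : V, G.Adj a b → H.Reachable a b) {a b : V} (hr : G.Reachable a b) :
    H.Reachable a b := by
  obtain ⟨w⟩ := hr
  induction w with
  | nil => exact Reachable.refl _
  | cons ha _ ih => exact (h _ _ ha).trans ih

private lemma mem_iff_of_reachable {V : Type*} {G : SimpleGraph V} {S : Set V}
    (h : ∀ a b : V, G.Adj a b → (a ∈ S ↔ b ∈ S)) {a b : V} (hr : G.Reachable a b) :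
    (a ∈ S ↔ b ∈ S) := by
  obtain ⟨w⟩ := hr
  induction w with
  | nil => exact Iff.rfl
  | cons ha _ ih => exact (h _ _ ha).trans ih

private lemma exists_crossing_edge {V : Type*} {G : SimpleGraph V} (S : Set V) :
    ∀ {a b : V} (w : G.Walk a b), w.edges.Nodup → a ∈ S → b ∉ S →
      ∃ u v : V, u ∈ S ∧ v ∉ S ∧ G.Adj u v ∧ s(u, v) ∈ w.edges ∧
        (G.deleteEdges {s(u, v)}).Reachable a u ∧ (G.deleteEdges {s(u, v)}).Reachable v b := by
  intro a b w
  induction w with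
  | nil => intro _ ha hb; exact absurd ha hb
  | @cons a c b hac w ih =>
    intro hnd ha hb
    rw [Walk.edges_cons, List.nodup_cons] at hnd
    by_cases hc : c ∈ S
    · obtain ⟨u, v, hu, hv, huv, hmem, h1, h2⟩ := ih hnd.2 hc hb
      refine ⟨u, v, hu, hv, huv, by simp [hmem], ?_, h2⟩
      have hadj : (G.deleteEdges {s(u, v)}).Adj a c := by
        rw [deleteEdges_adj]
        exact ⟨hac, by simp only [Set.mem_singleton_iff]; exact fun h => hnd.1 (h ▸ hmem)⟩
      exact hadj.reachable.trans h1
    · refine ⟨a, c, ha, hc, hac, by simp, Reachable.refl _, ?_⟩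
      exact ⟨w.toDeleteEdges _ (fun e he => by
        simp only [Set.mem_singleton_iff]; exact fun h => hnd.1 (h ▸ he))⟩

private lemma edgeWeight_mk {X : Type*} [MetricSpace X] (a b : X) :
    edgeWeight X s(a, b) = dist a b := rfl

private lemma edgeWeight_nonneg {X : Type*} [MetricSpace X] (e : Sym2 X) :
    0 ≤ edgeWeight X e := by
  induction e using Sym2.ind with
  | _ a b => rw [edgeWeight_mk]; exact dist_nonneg

private lemma graphWeight_le_of_subset {X : Type*} [MetricSpace X] [Fintype X]
    {G H : SimpleGraph X} (h : G.edgeSet ⊆ H.edgeSet) : graphWeight G ≤ graphWeight H := by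
  apply Finset.sum_le_sum_of_subset_of_nonneg
  · intro e he
    rw [Set.Finite.mem_toFinset] at he ⊢
    exact h he
  · exact fun e _ _ => edgeWeight_nonneg e

/-- Greedy algorithm (Algorithm 2): if `x 0, …, x (n-1)` enumerates a finite
ultrametric space so that each `x (i+1)` minimizes the distance to `x i` among
the points not yet chosen, then the path `x 0 — ⋯ — x (n-1)` is a minimum
weight spanning tree. -/
theorem greedy_path_isMST {X : Type*} [MetricSpace X] [Fintype X]
    (hu : ∀ x y z : X, dist x y ≤ max (dist x z) (dist z y))
    (n : ℕ) (x : ℕ → X)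
    (hbij : Function.Bijective fun i : Fin n => x i.val)
    (hgreedy : ∀ i : ℕ, i + 1 < n →
      ∀ y : X, (∀ j : ℕ, j ≤ i → y ≠ x j) → dist (x (i + 1)) (x i) ≤ dist y (x i)) :
    IsMST (pathGraphOn n x) := by
  classical
  have hinj : ∀ i j : ℕ, i < n → j < n → x i = x j → i = j := by
    intro i j hi hj h
    have := hbij.1 (a₁ := ⟨i, hi⟩) (a₂ := ⟨j, hj⟩) h
    exact congrArg Fin.val this
  have hne : ∀ i j : ℕ, i < n → j < n → i ≠ j → x i ≠ x j :=
    fun i j hi hj hij h => hij (hinj _ _ hi hj h)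
  set σ : Fin n ≃ X := Equiv.ofBijective _ hbij with hσ
  set idx : X → ℕ := fun y => (σ.symm y).1 with hidxdef
  have hidx_lt : ∀ y, idx y < n := fun y => (σ.symm y).2
  have hx_idx : ∀ y, x (idx y) = y := fun y => σ.apply_symm_apply y
  have hidx_x : ∀ k, k < n → idx (x k) = k :=
    fun k hk => hinj _ _ (hidx_lt _) hk (hx_idx (x k))
  have hn : 0 < n := Nat.pos_of_ne_zero fun h => Fin.elim0 (h ▸ σ.symm (x 0))
  -- Lemma A : later points are at least as close to the current point.
  have lemA : ∀ m j k : ℕ, k < n → j + m < k → dist (x k) (x (j + m)) ≤ dist (x k) (x j) := by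
    intro m
    induction m with
    | zero => intro j k _ _; simp
    | succ m ih =>
      intro j k hk hjm
      have h1 : j + m + 1 < n := by omega
      have hg : dist (x (j + m + 1)) (x (j + m)) ≤ dist (x k) (x (j + m)) := by
        apply hgreedy (j + m) h1 (x k)
        intro j' hj'
        exact hne k j' hk (by omega) (by omega)
      have hstep : dist (x k) (x (j + (m + 1))) ≤ dist (x k) (x (j + m)) := by
        have e : j + (m + 1) = j + m + 1 := rfl
        rw [e]
        refine (hu (x k) (x (j + m + 1)) (x (j + m))).trans ?_
        exact max_le le_rfl (by rwa [_root_.dist_comm])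
      exact hstep.trans (ih j k hk (by omega))
  -- Cut lemma : the greedy edge is cheapest across the cut {x 0, …, x k}.
  have cutLem : ∀ k j m : ℕ, k + 1 < n → j ≤ k → k < m → m < n →
      dist (x (k + 1)) (x k) ≤ dist (x m) (x j) := by
    intro k j m hk1 hjk hkm hm
    have h1 : dist (x (k + 1)) (x k) ≤ dist (x m) (x k) :=
      hgreedy k hk1 (x m) (fun j' hj' => hne m j' hm (by omega) (by omega))
    rcases eq_or_lt_of_le hjk with rfl | h
    · exact h1
    · have h2 := lemA (k - j) j m hm (by omega)
      rw [show j + (k - j) = k by omega] at h2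
      exact h1.trans h2
  -- Adjacency in the path graph.
  have hPadj : ∀ u v : X, (pathGraphOn n x).Adj u v ↔ u ≠ v ∧
      (∃ i, i + 1 < n ∧ (u = x i ∧ v = x (i + 1) ∨ v = x i ∧ u = x (i + 1))) := by
    intro u v
    rw [pathGraphOn, fromRel_adj]
    constructor
    · rintro ⟨h1, (⟨i, hi, h2, h3⟩ | ⟨i, hi, h2, h3⟩)⟩
      exacts [⟨h1, i, hi, Or.inl ⟨h2, h3⟩⟩, ⟨h1, i, hi, Or.inr ⟨h2, h3⟩⟩]
    · rintro ⟨h1, i, hi, (⟨h2, h3⟩ | ⟨h2, h3⟩)⟩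
      exacts [⟨h1, Or.inl ⟨i, hi, h2, h3⟩⟩, ⟨h1, Or.inr ⟨i, hi, h2, h3⟩⟩]
  have hPadj' : ∀ k, k + 1 < n → (pathGraphOn n x).Adj (x k) (x (k + 1)) := fun k hk =>
    (hPadj _ _).2 ⟨hne k (k + 1) (by omega) hk (by omega), k, hk, Or.inl ⟨rfl, rfl⟩⟩
  -- The path graph is connected.
  have hreach : ∀ k, k < n → (pathGraphOn n x).Reachable (x 0) (x k) := by
    intro k
    induction k with
    | zero => intro _; exact Reachable.refl _
    | succ k ih => intro hk; exact (ih (by omega)).trans (hPadj' k hk).reachable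
  have hPconn : (pathGraphOn n x).Connected := by
    rw [connected_iff_exists_forall_reachable]
    exact ⟨x 0, fun w => (hx_idx w) ▸ hreach (idx w) (hidx_lt w)⟩
  -- The path graph is acyclic.
  have hPacyclic : (pathGraphOn n x).IsAcyclic := by
    rw [isAcyclic_iff_forall_adj_isBridge]
    intro u v huv
    obtain ⟨h1, i, hi, hcase⟩ := (hPadj u v).1 huv
    have hbr : (pathGraphOn n x).IsBridge s(x i, x (i + 1)) := by
      rw [isBridge_iff_adj_and_forall_walk_mem_edges]
      intro p
      by_contra hmem
      have hr : ((pathGraphOn n x).deleteEdges {s(x i, x (i + 1))}).Reachable (x i)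
          (x (i + 1)) :=
        ⟨p.toDeleteEdges _ (fun e he => by
          simp only [Set.mem_singleton_iff]; exact fun h => hmem (h ▸ he))⟩
      have hiff := mem_iff_of_reachable (S := {y : X | idx y ≤ i}) ?_ hr
      · have hxi : x i ∈ {y : X | idx y ≤ i} := by
          simp only [Set.mem_setOf_eq, hidx_x i (by omega)]; omega
        have hxi1 : x (i + 1) ∉ {y : X | idx y ≤ i} := by
          simp only [Set.mem_setOf_eq, hidx_x (i + 1) hi]; omega
        exact hxi1 (hiff.1 hxi)
      · intro a b hab
        rw [deleteEdges_adj] at hab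
        obtain ⟨ha1, j, hj, hcase'⟩ := (hPadj a b).1 hab.1
        have hji : j ≠ i := by
          intro h
          apply hab.2
          subst h
          rcases hcase' with ⟨rfl, rfl⟩ | ⟨rfl, rfl⟩
          · rfl
          · exact Sym2.eq_swap
        rcases hcase' with ⟨rfl, rfl⟩ | ⟨rfl, rfl⟩ <;>
          simp only [Set.mem_setOf_eq, hidx_x j (by omega), hidx_x (j + 1) hj] <;> omega
    have heq : s(u, v) = s(x i, x (i + 1)) := by
      rcases hcase with ⟨rfl, rfl⟩ | ⟨rfl, rfl⟩
      · rfl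
      · exact Sym2.eq_swap
    rw [heq]
    exact hbr
  have hPtree : (pathGraphOn n x).IsTree := ⟨hPconn, hPacyclic⟩
  -- Characterization of the path's edges.
  have hPedge : ∀ e ∈ (pathGraphOn n x).edgeSet, ∃ i, i + 1 < n ∧ e = s(x i, x (i + 1)) := by
    intro e
    induction e using Sym2.ind with
    | _ u v =>
      intro he
      rw [mem_edgeSet] at he
      obtain ⟨h1, i, hi, hcase⟩ := (hPadj u v).1 he
      refine ⟨i, hi, ?_⟩
      rcases hcase with ⟨rfl, rfl⟩ | ⟨rfl, rfl⟩
      · rfl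
      · exact Sym2.eq_swap
  -- The exchange argument.
  have key : ∀ (G : SimpleGraph X), G.IsTree → ∀ k : ℕ, k ≤ n - 1 →
      ∃ T : SimpleGraph X, T.IsTree ∧ (∀ i, i < k → s(x i, x (i + 1)) ∈ T.edgeSet) ∧
        graphWeight T ≤ graphWeight G := by
    intro G hG k
    induction k with
    | zero => exact fun _ => ⟨G, hG, fun i h => absurd h (Nat.not_lt_zero i), le_rfl⟩
    | succ k ih =>
      intro hk
      obtain ⟨T, hT, hTpre, hTw⟩ := ih (by omega)
      have hk1 : k + 1 < n := by omega
      have hne0 : x k ≠ x (k + 1) := hne k (k + 1) (by omega) hk1 (by omega)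
      by_cases hek : s(x k, x (k + 1)) ∈ T.edgeSet
      · refine ⟨T, hT, fun i hi => ?_, hTw⟩
        rcases Nat.lt_succ_iff_lt_or_eq.mp hi with h | h
        · exact hTpre i h
        · rw [h]; exact hek
      · obtain ⟨w⟩ := hT.isConnected (x k) (x (k + 1))
        set p := w.bypass with hpdef
        have hp : p.IsPath := w.bypass_isPath
        have hnd : p.edges.Nodup := hp.isTrail.edges_nodup
        have hxk_mem : x k ∈ {y : X | idx y ≤ k} := by
          simp only [Set.mem_setOf_eq, hidx_x k (by omega)]; omega
        have hxk1_not : x (k + 1) ∉ {y : X | idx y ≤ k} := by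
          simp only [Set.mem_setOf_eq, hidx_x (k + 1) hk1]; omega
        obtain ⟨u, v, hcu, hcv, huv, hfmem, hru, hrv⟩ :=
          exists_crossing_edge _ p hnd hxk_mem hxk1_not
        have hfT : s(u, v) ∈ T.edgeSet := huv
        have hfne : s(u, v) ≠ s(x k, x (k + 1)) := fun h => hek (h ▸ hfT)
        set T' : SimpleGraph X := T.deleteEdges {s(u, v)} ⊔ SimpleGraph.edge (x k) (x (k + 1))
          with hT'def
        have hT'edge : T'.edgeSet = (T.edgeSet \ {s(u, v)}) ∪ {s(x k, x (k + 1))} := by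
          rw [hT'def, edgeSet_sup, edgeSet_deleteEdges, edge_edgeSet_of_ne hne0]
        have hle1 : T.deleteEdges {s(u, v)} ≤ T' := le_sup_left
        have hedgeAdj : T'.Adj (x k) (x (k + 1)) :=
          (le_sup_right : SimpleGraph.edge (x k) (x (k + 1)) ≤ T')
            ((edge_adj _ _ _ _).2 ⟨Or.inl ⟨rfl, rfl⟩, hne0⟩)
        have hruv : T'.Reachable u v :=
          ((hru.mono hle1).symm.trans hedgeAdj.reachable).trans (hrv.mono hle1).symm
        have hadjT' : ∀ a b : X, T.Adj a b → T'.Reachable a b := by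
          intro a b hab
          by_cases h : s(a, b) = s(u, v)
          · rw [Sym2.eq_iff] at h
            rcases h with ⟨rfl, rfl⟩ | ⟨rfl, rfl⟩
            · exact hruv
            · exact hruv.symm
          · exact (hle1 (by rw [deleteEdges_adj]; exact ⟨hab, by simpa using h⟩)).reachable
        have hT'conn : T'.Connected := by
          have hc := hT.isConnected
          rw [connected_iff] at hc ⊢
          exact ⟨fun a b => reachable_trans_of_adj hadjT' (hc.1 a b), hc.2⟩
        have hdel_le : T'.deleteEdges {s(x k, x (k + 1))} ≤ T.deleteEdges {s(u, v)} := by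
          intro a b hab
          rw [deleteEdges_adj] at hab
          rcases hab.1 with h | h
          · exact h
          · rw [edge_adj] at h
            exfalso
            apply hab.2
            rcases h.1 with ⟨rfl, rfl⟩ | ⟨rfl, rfl⟩
            · rfl
            · exact Sym2.eq_swap
        have hbridge : T'.IsBridge s(x k, x (k + 1)) := by
          rw [isBridge_iff_adj_and_forall_walk_mem_edges]
          intro q
          by_contra hqmem
          have hq' : (T.deleteEdges {s(u, v)}).Reachable (x k) (x (k + 1)) :=
            Reachable.mono hdel_le ⟨q.toDeleteEdges _ (fun e he => by
              simp only [Set.mem_singleton_iff]; exact fun h => hqmem (h ▸ he))⟩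
          obtain ⟨q'⟩ := hq'
          set q'' := q'.bypass with hq''def
          have hq''path : q''.IsPath := q'.bypass_isPath
          have hsub : ∀ e ∈ q''.edges, e ∈ T.edgeSet := by
            intro e he
            have h1 := q''.edges_subset_edgeSet he
            rw [edgeSet_deleteEdges] at h1
            exact h1.1
          have hq3path : (q''.transfer T hsub).IsPath := hq''path.transfer hsub
          have hpq := hT.IsAcyclic.path_unique ⟨p, hp⟩ ⟨q''.transfer T hsub, hq3path⟩
          have : s(u, v) ∈ (q''.transfer T hsub).edges := by
            have hweq : p = q''.transfer T hsub := congrArg Subtype.val hpq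
            rw [← hweq]
            exact hfmem
          rw [Walk.edges_transfer] at this
          have h2 := q''.edges_subset_edgeSet this
          rw [edgeSet_deleteEdges] at h2
          exact h2.2 rfl
        have hT'acyclic : T'.IsAcyclic := by
          intro w0 c hc
          by_cases hmemc : s(x k, x (k + 1)) ∈ c.edges
          · exact (isBridge_iff_forall_cycle_notMem hedgeAdj).mp hbridge c hc hmemc
          · have hsub : ∀ e ∈ c.edges, e ∈ T.edgeSet := by
              intro e he
              have h1 := c.edges_subset_edgeSet he
              rw [hT'edge] at h1
              rcases h1 with ⟨h1, _⟩ | h1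
              · exact h1
              · rw [Set.mem_singleton_iff] at h1
                exact absurd (h1 ▸ he) hmemc
            exact hT.IsAcyclic (c.transfer T hsub) (hc.transfer hsub)
        have hT'pre : ∀ i, i < k + 1 → s(x i, x (i + 1)) ∈ T'.edgeSet := by
          intro i hi
          rw [hT'edge]
          rcases Nat.lt_succ_iff_lt_or_eq.mp hi with h | h
          · left
            refine ⟨hTpre i h, ?_⟩
            simp only [Set.mem_singleton_iff]
            intro hEq
            rw [Sym2.eq_iff] at hEq
            apply hcv
            simp only [Set.mem_setOf_eq]
            rcases hEq with ⟨h1, h2⟩ | ⟨h1, h2⟩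
            · rw [← h2, hidx_x (i + 1) (by omega)]; omega
            · rw [← h1, hidx_x i (by omega)]; omega
          · right; rw [h]; rfl
        -- weight comparison
        have hwle : graphWeight T' ≤ graphWeight T := by
          have hFT' : T'.edgeSet.toFinite.toFinset =
              insert s(x k, x (k + 1)) (T.edgeSet.toFinite.toFinset.erase s(u, v)) := by
            ext e
            simp only [Set.Finite.mem_toFinset, hT'edge, Set.mem_union, Set.mem_diff,
              Set.mem_singleton_iff, Finset.mem_insert, Finset.mem_erase,
              Set.Finite.mem_toFinset]
            tauto
          have hekn : s(x k, x (k + 1)) ∉ T.edgeSet.toFinite.toFinset.erase s(u, v) := by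
            simp only [Finset.mem_erase, Set.Finite.mem_toFinset]
            exact fun h => hek h.2
          have hfF : s(u, v) ∈ T.edgeSet.toFinite.toFinset := by
            rwa [Set.Finite.mem_toFinset]
          have hcut : edgeWeight X s(x k, x (k + 1)) ≤ edgeWeight X s(u, v) := by
            rw [edgeWeight_mk, edgeWeight_mk]
            have hviS : ¬ idx v ≤ k := hcv
            have h1 := cutLem k (idx u) (idx v) hk1 hcu (by omega) (hidx_lt v)
            rw [hx_idx u, hx_idx v] at h1
            calc dist (x k) (x (k + 1)) = dist (x (k + 1)) (x k) := dist_comm _ _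
              _ ≤ dist v u := h1
              _ = dist u v := dist_comm _ _
          rw [graphWeight, graphWeight, hFT', Finset.sum_insert hekn,
            ← Finset.add_sum_erase _ _ hfF]
          exact add_le_add_left hcut _
        exact ⟨T', ⟨hT'conn, hT'acyclic⟩, hT'pre, hwle.trans hTw⟩
  refine ⟨hPtree, ?_⟩
  intro G hG
  obtain ⟨T, hT, hTpre, hTw⟩ := key G hG (n - 1) le_rfl
  have hsub : (pathGraphOn n x).edgeSet ⊆ T.edgeSet := by
    intro e he
    obtain ⟨i, hi, rfl⟩ := hPedge e he
    exact hTpre i (by omega)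
  exact (graphWeight_le_of_subset hsub).trans hTw
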